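/- Let φ(x,t) = t^p + a(x) t^q with 1 < p < q < ∞ and a a nonnegative function in C^{0,α}(ℝⁿ) for some α ∈ (0,1]. A compact set E ⊆ ℝⁿ is locally uniformly infimally φ-fat (for some parameters c_fat > 0 and 0 < r_o ≤ 1) if and only if it is locally uniformly p-fat (for some, possibly different, parameters). -/

import Mathlib

open MeasureTheory Metric Set
open scoped NNReal

noncomputable section

/-- Euclidean space `ℝⁿ`. -/
abbrev En (n : ℕ) : Type := EuclideanSpace ℝ (Fin n)

/-- Norm of the (a.e. defined, by Rademacher's theorem) gradient of `u` at `x`. -/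
def gnorm {n : ℕ} (u : En n → ℝ) (x : En n) : ℝ := ‖fderiv ℝ u x‖

/-- Admissible test functions for the level-`t` capacity of `E` in `O`:
Lipschitz on the closure of `O`, `u ≥ t` on `E`, `u = 0` on `∂O`. -/
def Adm {n : ℕ} (E O : Set (En n)) (t : ℝ) : Set (En n → ℝ) :=
  {u | (∃ K, LipschitzOnWith K u (closure O)) ∧ (∀ x ∈ E, t ≤ u x) ∧
    ∀ x ∈ frontier O, u x = 0}

/-- Level-`t` variational capacity with integrand `ψ` and normalization `ψm`. -/
def capLevel {n : ℕ} (ψ : En n → ℝ → ℝ) (ψm : ℝ → ℝ)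
    (E O : Set (En n)) (t : ℝ) : ℝ :=
  sInf ((fun u => ∫ x in O, ψ x (gnorm u x) / ψm t) '' Adm E O t)

/-- Infimal capacity with integrand `ψ` and normalization `ψm`. -/
def capInfGen {n : ℕ} (ψ : En n → ℝ → ℝ) (ψm : ℝ → ℝ) (E O : Set (En n)) : ℝ :=
  ⨅ t : Ioi (0 : ℝ), capLevel ψ ψm E O (t : ℝ)

/-- The double-phase integrand `φ(x,t) = t^p + a(x) t^q`. -/
def phi {n : ℕ} (a : En n → ℝ) (p q : ℝ) (x : En n) (t : ℝ) : ℝ :=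
  t ^ p + a x * t ^ q

/-- `a_O^- = inf_{x ∈ O} a(x)`. -/
def aInfOn {n : ℕ} (a : En n → ℝ) (O : Set (En n)) : ℝ := sInf (a '' O)

/-- `a_O^+ = sup_{x ∈ O} a(x)`. -/
def aSupOn {n : ℕ} (a : En n → ℝ) (O : Set (En n)) : ℝ := sSup (a '' O)

/-- `φ_O^-(t) = t^p + a_O^- t^q`. -/
def phiMinus {n : ℕ} (a : En n → ℝ) (p q : ℝ) (O : Set (En n)) (t : ℝ) : ℝ :=
  t ^ p + aInfOn a O * t ^ q

/-- Level-`t` variational capacity for the double-phase integrand. -/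
def capPhiLevel {n : ℕ} (a : En n → ℝ) (p q t : ℝ) (E O : Set (En n)) : ℝ :=
  capLevel (phi a p q) (phiMinus a p q O) E O t

/-- Infimal `φ`-capacity. -/
def capPhiInf {n : ℕ} (a : En n → ℝ) (p q : ℝ) (E O : Set (En n)) : ℝ :=
  ⨅ t : Ioi (0 : ℝ), capPhiLevel a p q (t : ℝ) E O

/-- Variational `p`-capacity. -/
def capP {n : ℕ} (p : ℝ) (E O : Set (En n)) : ℝ :=
  sInf ((fun u => ∫ x in O, gnorm u x ^ p) '' Adm E O 1)

/-- The rescaled set `{x ∈ B̄(0,1/2) : z + r x ∈ E}`. -/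
def shiftedSet {n : ℕ} (E : Set (En n)) (z : En n) (r : ℝ) : Set (En n) :=
  {x ∈ closedBall (0 : En n) (1 / 2) | z + r • x ∈ E}

/-- Local uniform infimal `φ`-fatness with parameters `cfat` and `ro`. -/
def LocUnifPhiFat {n : ℕ} (a : En n → ℝ) (p q : ℝ) (E : Set (En n))
    (cfat ro : ℝ) : Prop :=
  ∀ z ∈ E, ∀ r : ℝ, 0 < r → r < ro →
    cfat ≤ capPhiInf (fun x => a (z + r • x)) p q (shiftedSet E z r) (ball (0 : En n) 1)

/-- Local uniform `p`-fatness with parameters `cfat` and `ro`. -/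
def LocUnifPFat {n : ℕ} (p : ℝ) (E : Set (En n)) (cfat ro : ℝ) : Prop :=
  ∀ z ∈ E, ∀ r : ℝ, 0 < r → r < ro →
    cfat ≤ capP p (shiftedSet E z r) (ball (0 : En n) 1)

/-- `Lip_0(Ω)`: Lipschitz functions with compact support contained in `Ω`,
extended by zero to `ℝⁿ`. -/
def Lip0 {n : ℕ} (Ω : Set (En n)) : Set (En n → ℝ) :=
  {u | (∃ K, LipschitzWith K u) ∧ HasCompactSupport u ∧ tsupport u ⊆ Ω}

/-- Restricted centered maximal operator `M_R f(x) = sup_{0<r<R} ⨍_{B(x,r)} |f|`. -/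
def maxOp {n : ℕ} (R : ℝ) (f : En n → ℝ) (x : En n) : ℝ :=
  ⨆ r : Ioo (0 : ℝ) R, ⨍ y in ball x (r : ℝ), |f y|


section Helpers

variable {n : ℕ}

lemma measurable_gnorm (u : En n → ℝ) : Measurable (gnorm u) :=
  (measurable_fderiv ℝ u).norm

lemma gnorm_nonneg (u : En n → ℝ) (x : En n) : 0 ≤ gnorm u x := norm_nonneg _

lemma gnorm_const_mul {c : ℝ} (hc : c ≠ 0) (v : En n → ℝ) (x : En n) :
    gnorm (fun y => c * v y) x = |c| * gnorm v x := by
  by_cases hd : DifferentiableAt ℝ v x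
  · unfold gnorm
    rw [fderiv_const_mul hd c, norm_smul, Real.norm_eq_abs]
  · have hd2 : ¬ DifferentiableAt ℝ (fun y => c * v y) x := by
      intro h
      have h2 := h.const_mul c⁻¹
      have he : (fun y => c⁻¹ * (c * v y)) = v := by
        funext y; rw [← mul_assoc, inv_mul_cancel₀ hc, one_mul]
      exact hd (he ▸ h2)
    unfold gnorm
    rw [fderiv_zero_of_not_differentiableAt hd, fderiv_zero_of_not_differentiableAt hd2]
    simp

lemma lipschitzOnWith_const_mul {K : ℝ≥0} {s : Set (En n)} {v : En n → ℝ}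
    (h : LipschitzOnWith K v s) (c : ℝ) :
    LipschitzOnWith (⟨|c|, abs_nonneg c⟩ * K) (fun y => c * v y) s := by
  rw [lipschitzOnWith_iff_dist_le_mul] at h ⊢
  intro x hx y hy
  have h1 := h x hx y hy
  have h2 : dist (c * v x) (c * v y) = |c| * dist (v x) (v y) := by
    rw [Real.dist_eq, Real.dist_eq, ← mul_sub, abs_mul]
  rw [h2]
  calc |c| * dist (v x) (v y) ≤ |c| * (↑K * dist x y) :=
        mul_le_mul_of_nonneg_left h1 (abs_nonneg c)
    _ = ↑(⟨|c|, abs_nonneg c⟩ : ℝ≥0) * ↑K * dist x y := by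
        simp [mul_assoc]

lemma adm_const_mul {E O : Set (En n)} {t c : ℝ} (hc : 0 < c) {v : En n → ℝ}
    (hv : v ∈ Adm E O t) : (fun y => c * v y) ∈ Adm E O (c * t) := by
  obtain ⟨⟨K, hK⟩, h1, h2⟩ := hv
  exact ⟨⟨_, lipschitzOnWith_const_mul hK c⟩,
    fun x hx => mul_le_mul_of_nonneg_left (h1 x hx) hc.le,
    fun x hx => by show c * v x = 0; rw [h2 x hx, mul_zero]⟩

def bump {n : ℕ} (x : En n) : ℝ := max 0 (min 1 (2 - 2 * ‖x‖))

lemma lipschitz_bump : LipschitzWith 2 (bump (n := n)) := by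
  rw [lipschitzWith_iff_dist_le_mul]
  intro x y
  have h1 : dist (bump x) (bump y) ≤ |(2 - 2 * ‖x‖) - (2 - 2 * ‖y‖)| := by
    rw [Real.dist_eq]
    unfold bump
    rw [max_comm (0:ℝ), max_comm (0:ℝ)]
    calc |max (min 1 (2 - 2*‖x‖)) 0 - max (min 1 (2 - 2*‖y‖)) 0|
        ≤ |min 1 (2 - 2*‖x‖) - min 1 (2 - 2*‖y‖)| := abs_max_sub_max_le_abs _ _ _
      _ ≤ max |(1:ℝ) - 1| |(2 - 2*‖x‖) - (2 - 2*‖y‖)| := abs_min_sub_min_le_max _ _ _ _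
      _ ≤ |(2 - 2*‖x‖) - (2 - 2*‖y‖)| := by simp
  have h2 : |(2 - 2*‖x‖) - (2 - 2*‖y‖)| ≤ 2 * dist x y := by
    have h3 : |(2 - 2*‖x‖) - (2 - 2*‖y‖)| = 2 * |‖y‖ - ‖x‖| := by
      have he : (2 - 2*‖x‖) - (2 - 2*‖y‖) = 2*(‖y‖ - ‖x‖) := by ring
      rw [he, abs_mul, abs_two]
    rw [h3, dist_eq_norm]
    have := abs_norm_sub_norm_le y x
    have h4 : ‖y - x‖ = ‖x - y‖ := norm_sub_rev y x
    linarith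
  calc dist (bump x) (bump y) ≤ |(2 - 2*‖x‖) - (2 - 2*‖y‖)| := h1
    _ ≤ 2 * dist x y := h2
    _ = ↑(2:ℝ≥0) * dist x y := by norm_num

lemma bump_mem {E' : Set (En n)} (hE' : E' ⊆ closedBall 0 (1/2)) :
    bump ∈ Adm E' (ball (0 : En n) 1) 1 := by
  refine ⟨⟨2, lipschitz_bump.lipschitzOnWith⟩, ?_, ?_⟩
  · intro x hx
    have h : ‖x‖ ≤ 1/2 := by
      have := hE' hx
      rwa [mem_closedBall, dist_zero_right] at this
    unfold bump
    have h1 : (1:ℝ) ≤ 2 - 2*‖x‖ := by linarith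
    rw [min_eq_left h1, max_eq_right zero_le_one]
  · intro x hx
    have h1 : ‖x‖ ≤ 1 := by
      have h2 : x ∈ closedBall (0 : En n) 1 :=
        closure_ball_subset_closedBall (frontier_subset_closure hx)
      rwa [mem_closedBall, dist_zero_right] at h2
    have h2 : ¬ ‖x‖ < 1 := by
      intro h
      rw [frontier, mem_diff] at hx
      exact hx.2 (by rwa [isOpen_ball.interior_eq, mem_ball, dist_zero_right])
    have h3 : ‖x‖ = 1 := le_antisymm h1 (not_lt.1 h2)
    unfold bump
    rw [h3]
    norm_num

lemma aInfOn_nonneg {aa : En n → ℝ} (haa : ∀ x, 0 ≤ aa x) (O : Set (En n)) :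
    0 ≤ aInfOn aa O :=
  Real.sInf_nonneg (by rintro y ⟨x, _, rfl⟩; exact haa x)

lemma aInfOn_le {aa : En n → ℝ} (haa : ∀ x, 0 ≤ aa x) {O : Set (En n)} {x : En n}
    (hx : x ∈ O) : aInfOn aa O ≤ aa x :=
  csInf_le ⟨0, by rintro y ⟨z, _, rfl⟩; exact haa z⟩ (mem_image_of_mem aa hx)

lemma phiMinus_pos {aa : En n → ℝ} (haa : ∀ x, 0 ≤ aa x) {p q t : ℝ} (ht : 0 < t)
    (O : Set (En n)) : 0 < phiMinus aa p q O t := by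
  unfold phiMinus
  have h0 := aInfOn_nonneg haa O
  have h1 : 0 < t ^ p := Real.rpow_pos_of_pos ht p
  have h2 : (0:ℝ) ≤ t ^ q := (Real.rpow_pos_of_pos ht q).le
  nlinarith

lemma integrableOn_ball_of_bound {f : En n → ℝ} (hm : Measurable f) {C : ℝ}
    (hb : ∀ x ∈ ball (0 : En n) 1, |f x| ≤ C) :
    IntegrableOn f (ball (0 : En n) 1) := by
  refine Integrable.mono' (g := fun _ => C)
    (integrableOn_const measure_ball_lt_top.ne) hm.aestronglyMeasurable ?_
  rw [ae_restrict_iff' measurableSet_ball]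
  exact ae_of_all _ fun x hx => by simpa [Real.norm_eq_abs] using hb x hx

lemma gnorm_le_of_mem_ball {K : ℝ≥0} {u : En n → ℝ}
    (hu : LipschitzOnWith K u (closure (ball (0:En n) 1))) {x : En n}
    (hx : x ∈ ball (0:En n) 1) : gnorm u x ≤ K :=
  norm_fderiv_le_of_lipschitzOn ℝ
    (Filter.mem_of_superset (isOpen_ball.mem_nhds hx) subset_closure) hu

lemma continuous_of_holder {a : En n → ℝ} {A α : ℝ} (hα : 0 < α) (hA : 0 ≤ A)
    (haH : ∀ x y, |a x - a y| ≤ A * dist x y ^ α) : Continuous a := by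
  rw [Metric.continuous_iff]
  intro b ε hε
  have hA1 : (0:ℝ) < A + 1 := by linarith
  refine ⟨(ε/(A+1))^α⁻¹, Real.rpow_pos_of_pos (by positivity) _, fun x hx => ?_⟩
  have h1 : dist (a x) (a b) ≤ A * dist x b ^ α := by
    rw [Real.dist_eq]; exact haH x b
  have h2 : dist x b ^ α ≤ ε/(A+1) := by
    calc dist x b ^ α ≤ ((ε/(A+1))^α⁻¹)^α := Real.rpow_le_rpow dist_nonneg hx.le hα.le
      _ = ε/(A+1) := Real.rpow_inv_rpow (by positivity) hα.ne'
  have h3 : A * (ε/(A+1)) < ε := by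
    rw [mul_div_assoc'] at *
    rw [div_lt_iff₀ hA1]
    nlinarith
  calc dist (a x) (a b) ≤ A * (ε/(A+1)) :=
        h1.trans (mul_le_mul_of_nonneg_left h2 hA)
    _ < ε := h3

lemma rpow_eps_bound {p q ε S : ℝ} (hp : 0 < p) (hpq : p ≤ q) (hε : 0 < ε)
    (hε1 : ε ≤ 1) (hS : 0 ≤ S) :
    ε^q * S^p ≤ ε^(p+q) + min (S^p) (S^q) := by
  have hq : 0 < q := lt_of_lt_of_le hp hpq
  have hεpq : (0:ℝ) ≤ ε^(p+q) := Real.rpow_nonneg hε.le _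
  rcases le_or_gt S ε with h | h
  · have h1 : S^p ≤ ε^p := Real.rpow_le_rpow hS h hp.le
    have hmin : 0 ≤ min (S^p) (S^q) :=
      le_min (Real.rpow_nonneg hS p) (Real.rpow_nonneg hS q)
    have h2 : ε^q * S^p ≤ ε^q * ε^p :=
      mul_le_mul_of_nonneg_left h1 (Real.rpow_nonneg hε.le q)
    have h3 : ε^q * ε^p = ε^(p+q) := by rw [Real.rpow_add hε]; ring
    linarith
  · have hS0 : 0 < S := hε.trans h
    rcases le_or_gt S 1 with h1 | h1
    · have hqp : S ^ q ≤ S ^ p := Real.rpow_le_rpow_of_exponent_ge hS0 h1 hpq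
      have hmin : min (S^p) (S^q) = S^q := min_eq_right hqp
      have h2 : ε^q ≤ S^(q-p) := by
        calc ε^q ≤ S^q := Real.rpow_le_rpow hε.le h.le hq.le
          _ ≤ S^(q-p) := Real.rpow_le_rpow_of_exponent_ge hS0 h1 (by linarith)
      have h3 : ε^q * S^p ≤ S^(q-p) * S^p :=
        mul_le_mul_of_nonneg_right h2 (Real.rpow_nonneg hS p)
      have h4 : S^(q-p) * S^p = S^q := by
        rw [← Real.rpow_add hS0]; ring_nf
      rw [hmin]; linarith
    · have hmin : min (S^p) (S^q) = S^p :=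
        min_eq_left (Real.rpow_le_rpow_of_exponent_le h1.le hpq)
      have h2 : ε^q ≤ 1 := Real.rpow_le_one hε.le hε1 hq.le
      have h3 : (0:ℝ) ≤ S^p := Real.rpow_nonneg hS p
      rw [hmin]
      nlinarith

end Helpers

section Cores

variable {n : ℕ}

lemma capPhiLevel_nonneg {aa : En n → ℝ} (haa0 : ∀ x, 0 ≤ aa x) {p q t : ℝ}
    (ht : 0 < t) (E' : Set (En n)) : 0 ≤ capPhiLevel aa p q t E' (ball 0 1) := by
  simp only [capPhiLevel, capLevel]
  apply Real.sInf_nonneg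
  rintro b ⟨v, hv, rfl⟩
  apply setIntegral_nonneg measurableSet_ball
  intro x hx
  apply div_nonneg
  · simp only [phi]
    exact add_nonneg (Real.rpow_nonneg (gnorm_nonneg v x) p)
      (mul_nonneg (haa0 x) (Real.rpow_nonneg (gnorm_nonneg v x) q))
  · exact (phiMinus_pos haa0 ht _).le

lemma capPhiInf_le_capP {aa : En n → ℝ} (haa0 : ∀ x, 0 ≤ aa x)
    (haam : Measurable aa) {M : ℝ} (hM : 0 ≤ M)
    (haab : ∀ x ∈ ball (0 : En n) 1, aa x ≤ M) {p q : ℝ}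
    (hp0 : 0 < p) (hpq : p < q) {E' : Set (En n)}
    (hE' : E' ⊆ closedBall 0 (1/2)) :
    capPhiInf aa p q E' (ball 0 1) ≤ capP p E' (ball 0 1) := by
  have hq0 : 0 < q := hp0.trans hpq
  set O := ball (0 : En n) 1 with hO
  set κ := (volume O).toReal with hκ
  have hκ0 : 0 ≤ κ := ENNReal.toReal_nonneg
  refine le_csInf ⟨_, mem_image_of_mem _ (bump_mem hE')⟩ ?_
  rintro b ⟨v, hv, rfl⟩
  obtain ⟨K, hK⟩ := hv.1
  have hKb : ∀ x ∈ O, gnorm v x ≤ (K : ℝ) := fun x hx => gnorm_le_of_mem_ball hK hx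
  apply le_of_forall_pos_le_add
  intro ε hε
  set C₃ := M * (K:ℝ)^q * κ + 1 with hC₃def
  have hC₃ : 0 < C₃ := by positivity
  set t := (ε / C₃) ^ ((q - p)⁻¹) with htdef
  have ht : 0 < t := Real.rpow_pos_of_pos (div_pos hε hC₃) _
  have htqp : t ^ (q - p) = ε / C₃ :=
    Real.rpow_inv_rpow (div_nonneg hε.le hC₃.le) (sub_ne_zero_of_ne (ne_of_gt hpq))
  set u := fun y => t * v y with hudef
  have hu : u ∈ Adm E' O t := by
    have := adm_const_mul ht hv
    rwa [mul_one] at this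
  have hg : ∀ x, gnorm u x = t * gnorm v x := fun x => by
    rw [hudef, gnorm_const_mul ht.ne' v x, abs_of_pos ht]
  have hD : 0 < phiMinus aa p q O t := phiMinus_pos haa0 ht O
  -- pointwise bound
  have hptw : ∀ x ∈ O, phi aa p q x (gnorm u x) / phiMinus aa p q O t ≤
      gnorm v x ^ p + M * (K:ℝ)^q * t^(q-p) := by
    intro x hx
    have hh0 : 0 ≤ gnorm v x := gnorm_nonneg v x
    have hX0 : 0 ≤ gnorm v x ^ p + aa x * gnorm v x ^ q * t^(q-p) :=
      add_nonneg (Real.rpow_nonneg hh0 p)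
        (mul_nonneg (mul_nonneg (haa0 x) (Real.rpow_nonneg hh0 q)) (Real.rpow_nonneg ht.le _))
    have heq : phi aa p q x (gnorm u x) =
        t^p * (gnorm v x ^ p + aa x * gnorm v x ^ q * t^(q-p)) := by
      simp only [phi]
      rw [hg x, Real.mul_rpow ht.le hh0, Real.mul_rpow ht.le hh0, Real.rpow_sub ht]
      have htp : t ^ p ≠ 0 := (Real.rpow_pos_of_pos ht p).ne'
      field_simp
    rw [div_le_iff₀ hD, heq]
    have h1 : t^p ≤ phiMinus aa p q O t := by
      simp only [phiMinus]
      have := mul_nonneg (aInfOn_nonneg haa0 O) (Real.rpow_nonneg ht.le q)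
      linarith
    have h3 : aa x * gnorm v x ^ q * t^(q-p) ≤ M * (K:ℝ)^q * t^(q-p) := by
      apply mul_le_mul_of_nonneg_right _ (Real.rpow_nonneg ht.le _)
      exact mul_le_mul (haab x hx) (Real.rpow_le_rpow hh0 (hKb x hx) hq0.le)
        (Real.rpow_nonneg hh0 q) hM
    calc t^p * (gnorm v x ^ p + aa x * gnorm v x ^ q * t^(q-p))
        ≤ (gnorm v x ^ p + aa x * gnorm v x ^ q * t^(q-p)) * phiMinus aa p q O t := by
          rw [mul_comm]
          exact mul_le_mul_of_nonneg_left h1 hX0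
      _ ≤ (gnorm v x ^ p + M * (K:ℝ)^q * t^(q-p)) * phiMinus aa p q O t := by
          apply mul_le_mul_of_nonneg_right _ hD.le
          linarith
  -- measurability & integrability
  have hm : Measurable (fun x => phi aa p q x (gnorm u x) / phiMinus aa p q O t) := by
    apply Measurable.div_const
    exact ((Real.continuous_rpow_const hp0.le).measurable.comp (measurable_gnorm u)).add
      (haam.mul ((Real.continuous_rpow_const hq0.le).measurable.comp (measurable_gnorm u)))
  have hratio0 : ∀ x ∈ O, 0 ≤ phi aa p q x (gnorm u x) / phiMinus aa p q O t := by
    intro x _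
    apply div_nonneg _ hD.le
    simp only [phi]
    exact add_nonneg (Real.rpow_nonneg (gnorm_nonneg u x) p)
      (mul_nonneg (haa0 x) (Real.rpow_nonneg (gnorm_nonneg u x) q))
  have hint1 : IntegrableOn (fun x => phi aa p q x (gnorm u x) / phiMinus aa p q O t) O := by
    apply integrableOn_ball_of_bound hm (C := (K:ℝ)^p + M * (K:ℝ)^q * t^(q-p))
    intro x hx
    rw [abs_of_nonneg (hratio0 x hx)]
    refine (hptw x hx).trans ?_
    have := Real.rpow_le_rpow (gnorm_nonneg v x) (hKb x hx) hp0.le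
    linarith
  have hmp : Measurable (fun x => gnorm v x ^ p) :=
    (Real.continuous_rpow_const hp0.le).measurable.comp (measurable_gnorm v)
  have hint2 : IntegrableOn (fun x => gnorm v x ^ p) O := by
    apply integrableOn_ball_of_bound hmp (C := (K:ℝ)^p)
    intro x hx
    rw [abs_of_nonneg (Real.rpow_nonneg (gnorm_nonneg v x) p)]
    exact Real.rpow_le_rpow (gnorm_nonneg v x) (hKb x hx) hp0.le
  have hintc : IntegrableOn (fun _ : En n => M * (K:ℝ)^q * t^(q-p)) O :=
    integrableOn_const measure_ball_lt_top.ne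
  -- chain of inequalities
  have step2 : capPhiInf aa p q E' O ≤ capPhiLevel aa p q t E' O := by
    apply ciInf_le ⟨0, ?_⟩ (⟨t, ht⟩ : Ioi (0:ℝ))
    rintro b ⟨s, rfl⟩
    exact capPhiLevel_nonneg haa0 s.2 E'
  have step3 : capPhiLevel aa p q t E' O ≤
      ∫ x in O, phi aa p q x (gnorm u x) / phiMinus aa p q O t := by
    simp only [capPhiLevel, capLevel]
    apply csInf_le ⟨0, ?_⟩ (mem_image_of_mem _ hu)
    rintro b ⟨w, hw, rfl⟩
    apply setIntegral_nonneg measurableSet_ball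
    intro x _
    apply div_nonneg _ hD.le
    simp only [phi]
    exact add_nonneg (Real.rpow_nonneg (gnorm_nonneg w x) p)
      (mul_nonneg (haa0 x) (Real.rpow_nonneg (gnorm_nonneg w x) q))
  have step4 : ∫ x in O, phi aa p q x (gnorm u x) / phiMinus aa p q O t ≤
      ∫ x in O, (gnorm v x ^ p + M * (K:ℝ)^q * t^(q-p)) :=
    setIntegral_mono_on hint1 (hint2.add hintc) measurableSet_ball hptw
  have step5 : ∫ x in O, (gnorm v x ^ p + M * (K:ℝ)^q * t^(q-p)) =
      (∫ x in O, gnorm v x ^ p) + κ * (M * (K:ℝ)^q * t^(q-p)) := by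
    rw [integral_add hint2 hintc, setIntegral_const, smul_eq_mul]
    rfl
  have step6 : κ * (M * (K:ℝ)^q * t^(q-p)) ≤ ε := by
    rw [htqp]
    have h1 : κ * (M * (K:ℝ)^q * (ε / C₃)) = (M * (K:ℝ)^q * κ) * (ε / C₃) := by ring
    rw [h1]
    have h2 : (M * (K:ℝ)^q * κ) * (ε / C₃) ≤ C₃ * (ε / C₃) := by
      apply mul_le_mul_of_nonneg_right _ (div_nonneg hε.le hC₃.le)
      rw [hC₃def]
      linarith
    have h3 : C₃ * (ε / C₃) = ε := by field_simp
    linarith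
  calc capPhiInf aa p q E' O ≤ capPhiLevel aa p q t E' O := step2
    _ ≤ ∫ x in O, phi aa p q x (gnorm u x) / phiMinus aa p q O t := step3
    _ ≤ (∫ x in O, gnorm v x ^ p) + κ * (M * (K:ℝ)^q * t^(q-p)) := by
        rw [← step5]; exact step4
    _ ≤ (∫ x in O, gnorm v x ^ p) + ε := by linarith

lemma capPhiInf_ge {aa : En n → ℝ} (haa0 : ∀ x, 0 ≤ aa x)
    (haam : Measurable aa) {M : ℝ} (hM : 0 ≤ M)
    (haab : ∀ x ∈ ball (0 : En n) 1, aa x ≤ M) {p q : ℝ}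
    (hp0 : 0 < p) (hpq : p < q) {E' : Set (En n)}
    (hE' : E' ⊆ closedBall 0 (1/2)) {c : ℝ} (hc : 0 < c)
    (hcap : c ≤ capP p E' (ball 0 1)) :
    (min 1 ((c/(2*((volume (ball (0:En n) 1)).toReal+1)))^(p⁻¹)))^q * (c/2) ≤
      capPhiInf aa p q E' (ball 0 1) := by
  have hq0 : 0 < q := hp0.trans hpq
  set O := ball (0 : En n) 1 with hO
  set κ := (volume O).toReal with hκ
  have hκ0 : 0 ≤ κ := ENNReal.toReal_nonneg
  set ε := min 1 ((c/(2*(κ+1)))^(p⁻¹)) with hεdef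
  have hε : 0 < ε := lt_min one_pos (Real.rpow_pos_of_pos (by positivity) _)
  have hε1 : ε ≤ 1 := min_le_left _ _
  have hεpκ : ε^p * κ ≤ c/2 := by
    have hmle : ε ≤ (c/(2*(κ+1)))^(p⁻¹) := min_le_right _ _
    have h1 : ε^p ≤ ((c/(2*(κ+1)))^(p⁻¹))^p := Real.rpow_le_rpow hε.le hmle hp0.le
    rw [Real.rpow_inv_rpow (by positivity) hp0.ne'] at h1
    have h2 : (c/(2*(κ+1))) * κ ≤ c/2 := by
      rw [div_mul_eq_mul_div, div_le_div_iff₀ (by positivity) (by norm_num)]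
      nlinarith
    nlinarith
  haveI : Nonempty (Ioi (0:ℝ)) := ⟨⟨1, mem_Ioi.2 one_pos⟩⟩
  apply le_ciInf
  rintro ⟨t, ht'⟩
  have ht : 0 < t := ht'
  simp only [capPhiLevel, capLevel]
  have hbump : (fun x => t * bump x) ∈ Adm E' O t := by
    have := adm_const_mul ht (bump_mem hE')
    rwa [mul_one] at this
  refine le_csInf ⟨_, mem_image_of_mem _ hbump⟩ ?_
  rintro b ⟨v, hv, rfl⟩
  obtain ⟨K, hK⟩ := hv.1
  have hKb : ∀ x ∈ O, gnorm v x ≤ (K : ℝ) := fun x hx => gnorm_le_of_mem_ball hK hx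
  set w := fun y => t⁻¹ * v y with hwdef
  have hw : w ∈ Adm E' O 1 := by
    have := adm_const_mul (inv_pos.2 ht) hv
    rwa [inv_mul_cancel₀ ht.ne'] at this
  obtain ⟨Kw, hKw⟩ := hw.1
  have hKwb : ∀ x ∈ O, gnorm w x ≤ (Kw : ℝ) := fun x hx => gnorm_le_of_mem_ball hKw hx
  have hS : ∀ x, gnorm w x = t⁻¹ * gnorm v x := fun x => by
    rw [hwdef, gnorm_const_mul (inv_ne_zero ht.ne') v x, abs_of_pos (inv_pos.2 ht)]
  have hvw : ∀ x, gnorm v x = t * gnorm w x := fun x => by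
    rw [hS x]; field_simp
  have hD : 0 < phiMinus aa p q O t := phiMinus_pos haa0 ht O
  -- pointwise bound
  have hptw : ∀ x ∈ O, ε^q * gnorm w x ^ p ≤
      ε^(p+q) + phi aa p q x (gnorm v x) / phiMinus aa p q O t := by
    intro x hx
    have hS0 : 0 ≤ gnorm w x := gnorm_nonneg w x
    have hminle : min (gnorm w x ^ p) (gnorm w x ^ q) ≤
        phi aa p q x (gnorm v x) / phiMinus aa p q O t := by
      rw [le_div_iff₀ hD]
      simp only [phi, phiMinus]
      rw [hvw x, Real.mul_rpow ht.le hS0, Real.mul_rpow ht.le hS0]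
      have h1 : min (gnorm w x ^ p) (gnorm w x ^ q) ≤ gnorm w x ^ p := min_le_left _ _
      have h2 : min (gnorm w x ^ p) (gnorm w x ^ q) ≤ gnorm w x ^ q := min_le_right _ _
      have haI0 : 0 ≤ aInfOn aa O := aInfOn_nonneg haa0 O
      have haIx : aInfOn aa O ≤ aa x := aInfOn_le haa0 hx
      have htp : 0 < t^p := Real.rpow_pos_of_pos ht p
      have htq : (0:ℝ) ≤ t^q := (Real.rpow_pos_of_pos ht q).le
      have hSq0 : (0:ℝ) ≤ gnorm w x ^ q := Real.rpow_nonneg hS0 q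
      nlinarith [mul_le_mul_of_nonneg_right h1 htp.le,
        mul_le_mul_of_nonneg_right h2 (mul_nonneg haI0 htq),
        mul_le_mul_of_nonneg_right haIx (mul_nonneg htq hSq0)]
    have := rpow_eps_bound hp0 hpq.le hε hε1 hS0
    linarith
  -- integrability
  have hm : Measurable (fun x => phi aa p q x (gnorm v x) / phiMinus aa p q O t) := by
    apply Measurable.div_const
    exact ((Real.continuous_rpow_const hp0.le).measurable.comp (measurable_gnorm v)).add
      (haam.mul ((Real.continuous_rpow_const hq0.le).measurable.comp (measurable_gnorm v)))
  have hratio0 : ∀ x ∈ O, 0 ≤ phi aa p q x (gnorm v x) / phiMinus aa p q O t := by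
    intro x _
    apply div_nonneg _ hD.le
    simp only [phi]
    exact add_nonneg (Real.rpow_nonneg (gnorm_nonneg v x) p)
      (mul_nonneg (haa0 x) (Real.rpow_nonneg (gnorm_nonneg v x) q))
  have hint_ratio : IntegrableOn (fun x => phi aa p q x (gnorm v x) / phiMinus aa p q O t) O := by
    apply integrableOn_ball_of_bound hm (C := ((K:ℝ)^p + M * (K:ℝ)^q) / phiMinus aa p q O t)
    intro x hx
    rw [abs_of_nonneg (hratio0 x hx)]
    rw [div_le_div_iff_of_pos_right hD]
    simp only [phi]
    have h1 : gnorm v x ^ p ≤ (K:ℝ)^p :=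
      Real.rpow_le_rpow (gnorm_nonneg v x) (hKb x hx) hp0.le
    have h2 : aa x * gnorm v x ^ q ≤ M * (K:ℝ)^q :=
      mul_le_mul (haab x hx) (Real.rpow_le_rpow (gnorm_nonneg v x) (hKb x hx) hq0.le)
        (Real.rpow_nonneg (gnorm_nonneg v x) q) hM
    linarith
  have hmSp : Measurable (fun x => gnorm w x ^ p) :=
    (Real.continuous_rpow_const hp0.le).measurable.comp (measurable_gnorm w)
  have hint_Sp : IntegrableOn (fun x => gnorm w x ^ p) O := by
    apply integrableOn_ball_of_bound hmSp (C := (Kw:ℝ)^p)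
    intro x hx
    rw [abs_of_nonneg (Real.rpow_nonneg (gnorm_nonneg w x) p)]
    exact Real.rpow_le_rpow (gnorm_nonneg w x) (hKwb x hx) hp0.le
  have hint_lhs : IntegrableOn (fun x => ε^q * gnorm w x ^ p) O := hint_Sp.const_mul _
  have hint_c : IntegrableOn (fun _ : En n => ε^(p+q)) O :=
    integrableOn_const measure_ball_lt_top.ne
  have hmono : (∫ x in O, ε^q * gnorm w x ^ p) ≤
      ∫ x in O, (ε^(p+q) + phi aa p q x (gnorm v x) / phiMinus aa p q O t) :=
    setIntegral_mono_on hint_lhs (hint_c.add hint_ratio) measurableSet_ball hptw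
  have hleft : (∫ x in O, ε^q * gnorm w x ^ p) = ε^q * ∫ x in O, gnorm w x ^ p :=
    integral_const_mul _ _
  have hright : (∫ x in O, (ε^(p+q) + phi aa p q x (gnorm v x) / phiMinus aa p q O t)) =
      κ * ε^(p+q) + ∫ x in O, phi aa p q x (gnorm v x) / phiMinus aa p q O t := by
    rw [integral_add hint_c hint_ratio, setIntegral_const, smul_eq_mul]
    rfl
  have hcap2 : c ≤ ∫ x in O, gnorm w x ^ p := by
    refine hcap.trans ?_
    simp only [capP]
    apply csInf_le ⟨0, ?_⟩ (mem_image_of_mem _ hw)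
    rintro b ⟨w2, _hw2, rfl⟩
    exact setIntegral_nonneg measurableSet_ball fun x _ =>
      Real.rpow_nonneg (gnorm_nonneg w2 x) p
  have hεq0 : 0 < ε^q := Real.rpow_pos_of_pos hε q
  have h6 : ε^q * c ≤ ε^q * ∫ x in O, gnorm w x ^ p :=
    mul_le_mul_of_nonneg_left hcap2 hεq0.le
  have h8 : κ * ε^(p+q) ≤ (c/2) * ε^q := by
    rw [Real.rpow_add hε]
    nlinarith [hεpκ, hεq0.le]
  show ε^q * (c/2) ≤ ∫ x in O, phi aa p q x (gnorm v x) / phiMinus aa p q O t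
  linarith

end Cores


/-- **Equivalence of local uniform infimal `φ`-fatness and local uniform
`p`-fatness** (Theorem 2.5). -/
theorem phiFat_iff_pFat
    (n : ℕ) (hn : 0 < n) (p q α A : ℝ) (a : En n → ℝ)
    (hp : 1 < p) (hpq : p < q) (hα : 0 < α) (hα1 : α ≤ 1)
    (ha : ∀ x, 0 ≤ a x) (hA : 0 ≤ A)
    (haH : ∀ x y, |a x - a y| ≤ A * dist x y ^ α)
    (E : Set (En n)) (hE : IsCompact E) :
    (∃ cfat ro : ℝ, 0 < cfat ∧ 0 < ro ∧ ro ≤ 1 ∧ LocUnifPhiFat a p q E cfat ro) ↔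
    (∃ cfat ro : ℝ, 0 < cfat ∧ 0 < ro ∧ ro ≤ 1 ∧ LocUnifPFat p E cfat ro) := by
  have hp0 : 0 < p := lt_trans one_pos hp
  have hconta : Continuous a := continuous_of_holder hα hA haH
  -- common facts about the shifted coefficient
  have hsetup : ∀ z : En n, ∀ r : ℝ, 0 < r → r ≤ 1 →
      (∀ x, 0 ≤ a (z + r • x)) ∧ Measurable (fun x : En n => a (z + r • x)) ∧
      (∀ x ∈ ball (0 : En n) 1, a (z + r • x) ≤ a z + A) := by
    intro z r hr hr1
    refine ⟨fun x => ha _, ?_, ?_⟩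
    · exact (hconta.comp (by fun_prop : Continuous fun x : En n => z + r • x)).measurable
    · intro x hx
      have hx1 : ‖x‖ < 1 := by rwa [mem_ball, dist_zero_right] at hx
      have hd : dist (z + r • x) z = r * ‖x‖ := by
        rw [dist_eq_norm, add_sub_cancel_left, norm_smul, Real.norm_eq_abs, abs_of_pos hr]
      have h1 := haH (z + r • x) z
      rw [hd] at h1
      have h2 : (r * ‖x‖) ^ α ≤ 1 := by
        apply Real.rpow_le_one (mul_nonneg hr.le (norm_nonneg x)) _ hα.le
        nlinarith [norm_nonneg x]
      have h3 : |a (z + r • x) - a z| ≤ A := by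
        calc |a (z + r • x) - a z| ≤ A * (r * ‖x‖) ^ α := h1
          _ ≤ A * 1 := mul_le_mul_of_nonneg_left h2 hA
          _ = A := mul_one A
      have := (abs_le.1 h3).2
      linarith
  constructor
  · rintro ⟨c, ro, hc, hro0, hro1, hfat⟩
    refine ⟨c, ro, hc, hro0, hro1, fun z hz r hr hrro => ?_⟩
    obtain ⟨h0, hm, hb⟩ := hsetup z r hr (le_of_lt (lt_of_lt_of_le hrro hro1))
    have hE' : shiftedSet E z r ⊆ closedBall 0 (1/2) := fun x hx => hx.1
    exact (hfat z hz r hr hrro).trans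
      (capPhiInf_le_capP h0 hm (add_nonneg (ha z) hA) hb hp0 hpq hE')
  · rintro ⟨c, ro, hc, hro0, hro1, hfat⟩
    refine ⟨(min 1 ((c/(2*((volume (ball (0:En n) 1)).toReal+1)))^(p⁻¹)))^q * (c/2), ro,
      ?_, hro0, hro1, fun z hz r hr hrro => ?_⟩
    · have hκ0 : (0:ℝ) ≤ (volume (ball (0:En n) 1)).toReal := ENNReal.toReal_nonneg
      have hε : 0 < min 1 ((c/(2*((volume (ball (0:En n) 1)).toReal+1)))^(p⁻¹)) :=
        lt_min one_pos (Real.rpow_pos_of_pos (by positivity) _)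
      exact mul_pos (Real.rpow_pos_of_pos hε q) (half_pos hc)
    · obtain ⟨h0, hm, hb⟩ := hsetup z r hr (le_of_lt (lt_of_lt_of_le hrro hro1))
      have hE' : shiftedSet E z r ⊆ closedBall 0 (1/2) := fun x hx => hx.1
      exact capPhiInf_ge h0 hm (add_nonneg (ha z) hA) hb hp0 hpq hE' hc
        (hfat z hz r hr hrro)
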